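/- Let R = ℚ[x,y]/(xy) and let R'' be a nonzero flat R-algebra on which y acts as zero (i.e. an R/y-algebra flat over R). Then x acts invertibly on R''. -/

import Mathlib

noncomputable section

set_option maxHeartbeats 1000000
set_option synthInstance.maxHeartbeats 400000

open MvPolynomial

/-- The ring `R = ℚ[x,y]/(xy)`. -/
abbrev RXY : Type :=
  MvPolynomial (Fin 2) ℚ ⧸ Ideal.span {(X 0 : MvPolynomial (Fin 2) ℚ) * X 1}

/-- The image of `x` in `R`. -/
abbrev xR : RXY := Ideal.Quotient.mk _ (X 0)

/-- The image of `y` in `R`. -/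
abbrev yR : RXY := Ideal.Quotient.mk _ (X 1)

lemma xy_zero : xR * yR = 0 := by
  rw [← map_mul, Ideal.Quotient.eq_zero_iff_mem]
  exact Ideal.subset_span rfl

/-- Exactness of `R →x R →y R` at the middle. -/
lemma exact_mul_x_mul_y :
    Function.Exact (LinearMap.mulLeft RXY xR) (LinearMap.mulLeft RXY yR) := by
  intro a
  constructor
  · intro h
    obtain ⟨p, rfl⟩ := Ideal.Quotient.mk_surjective a
    simp only [LinearMap.mulLeft_apply] at h
    have h' : (X 1 : MvPolynomial (Fin 2) ℚ) * p ∈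
        Ideal.span {(X 0 : MvPolynomial (Fin 2) ℚ) * X 1} := by
      rwa [← map_mul, Ideal.Quotient.eq_zero_iff_mem] at h
    obtain ⟨q, hq⟩ := Ideal.mem_span_singleton'.mp h'
    have hp : p = q * X 0 := by
      have hx1 : (X 1 : MvPolynomial (Fin 2) ℚ) ≠ 0 := X_ne_zero 1
      apply mul_left_cancel₀ hx1
      rw [← hq]; ring
    refine ⟨Ideal.Quotient.mk _ q, ?_⟩
    simp only [LinearMap.mulLeft_apply]
    rw [hp, map_mul]; ring
  · rintro ⟨b, rfl⟩
    simp only [LinearMap.mulLeft_apply]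
    calc yR * (xR * b) = (xR * yR) * b := by ring
    _ = 0 := by rw [xy_zero, zero_mul]

/-- For `R = ℚ[x,y]/(xy)`: on any nonzero flat `R`-algebra `R''` on which `y` acts as
zero, the element `x` acts invertibly. -/
theorem x_invertible_on_flat (R'' : Type) [CommRing R''] [Algebra RXY R'']
    [Module.Flat RXY R''] [Nontrivial R'']
    (hy : algebraMap RXY R'' yR = 0) :
    IsUnit (algebraMap RXY R'' xR) := by
  have hex := Module.Flat.lTensor_exact R'' exact_mul_x_mul_y
  set e : TensorProduct RXY R'' RXY →ₗ[RXY] R'' :=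
    (TensorProduct.rid RXY R'').toLinearMap with he
  have einj : Function.Injective e := (TensorProduct.rid RXY R'').injective
  have key : ∀ (c : RXY) (w : TensorProduct RXY R'' RXY),
      e ((LinearMap.lTensor R'' (LinearMap.mulLeft RXY c)) w) = c • e w := by
    intro c w
    induction w using TensorProduct.induction_on with
    | zero => rw [map_zero, map_zero, smul_zero]
    | tmul r a =>
        rw [LinearMap.lTensor_tmul, LinearMap.mulLeft_apply, he]
        simp only [LinearEquiv.coe_coe, TensorProduct.rid_tmul]
        rw [mul_smul]
    | add u v hu hv => rw [map_add, map_add, map_add, hu, hv]; exact (smul_add c (e u) (e v)).symm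
  have hz : (LinearMap.lTensor R'' (LinearMap.mulLeft RXY yR))
      ((1 : R'') ⊗ₜ[RXY] (1 : RXY)) = 0 := by
    apply einj
    rw [key, map_zero, he]
    simp only [LinearEquiv.coe_coe, TensorProduct.rid_tmul, one_smul]
    rw [Algebra.smul_def, hy, zero_mul]
  obtain ⟨w, hw⟩ := (hex _).mp hz
  have h1 : algebraMap RXY R'' xR * e w = 1 := by
    have hk := key xR w
    rw [hw, he] at hk
    simp only [LinearEquiv.coe_coe, TensorProduct.rid_tmul, one_smul] at hk
    rw [← Algebra.smul_def]
    simp only [he, LinearEquiv.coe_coe]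
    exact hk.symm
  exact IsUnit.of_mul_eq_one _ h1

end
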